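/- arXiv:2001.06746 — 4 statements merged into one kernel-verified Lean document; each statement's English description precedes it below -/
import Mathlib

section
/- Under conditional independence of S and Z given X, and given a subset W ⊂ Z of instrument values such that the events {S ∈ Σ, T = t'} and {S ∈ Σ, Z ∈ W} coincide, the probability P(T = t', S ∈ Σ) equals E[ P(S ∈ Σ | X) · π_W(X) ], where π_W(X) = Σ_{z∈W} P(Z = z | X). -/
open MeasureTheory ProbabilityTheory

/-- Under `S ⊥ Z | X` and the event coincidence `{S ∈ Σ, T = t'} = {S ∈ Σ, Z ∈ W}`,
the probability `P(T = t', S ∈ Σ)` equals `E[ P(S ∈ Σ | X) · π_W(X) ]`, where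
`π_W(X) = ∑_{z ∈ W} P(Z = z | X)` and conditional probabilities given `X` are
conditional expectations of indicators given the σ-algebra `mX` generated by `X`. -/
theorem prob_treatment_and_type_identification
    {Ω 𝓩 𝓢 𝓣 : Type*} {mΩ : MeasurableSpace Ω} [StandardBorelSpace Ω] [Nonempty Ω]
    [MeasurableSpace 𝓩] [MeasurableSingletonClass 𝓩] [MeasurableSpace 𝓢]
    (μ : Measure Ω) [IsProbabilityMeasure μ]
    (mX : MeasurableSpace Ω) (hmX : mX ≤ mΩ)
    (S : Ω → 𝓢) (Z : Ω → 𝓩) (T : Ω → 𝓣)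
    (hSmeas : Measurable[mΩ] S) (hZmeas : Measurable[mΩ] Z)
    (hSZ : CondIndepFun mX hmX S Z μ)
    (Sig : Set 𝓢) (hSig : MeasurableSet Sig) (t' : 𝓣) (W : Finset 𝓩)
    (hW : ∀ ω, (S ω ∈ Sig ∧ T ω = t') ↔ (S ω ∈ Sig ∧ Z ω ∈ W)) :
    (μ {ω | S ω ∈ Sig ∧ T ω = t'}).toReal
      = ∫ ω, (MeasureTheory.condExp mX μ ((S ⁻¹' Sig).indicator (fun _ => (1 : ℝ))) ω)
          * (∑ z ∈ W, MeasureTheory.condExp mX μ ((Z ⁻¹' {z}).indicator (fun _ => (1 : ℝ))) ω) ∂μ := by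
  classical
  have hAB : ∀ z : 𝓩, MeasurableSet[mΩ] (S ⁻¹' Sig ∩ Z ⁻¹' {z}) := fun z =>
    MeasurableSet.inter (hSmeas hSig) (hZmeas (measurableSet_singleton z))
  have hindep := (condIndepFun_iff_condExp_inter_preimage_eq_mul
    (μ := μ) (hm' := hmX) hSmeas hZmeas).mp hSZ
  -- key fact per z
  have hkey : ∀ z : 𝓩, (μ⟦S ⁻¹' Sig ∩ Z ⁻¹' {z} | mX⟧)
      =ᵐ[μ] fun ω => (μ⟦S ⁻¹' Sig | mX⟧) ω * (μ⟦Z ⁻¹' {z} | mX⟧) ω :=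
    fun z => hindep Sig {z} hSig (measurableSet_singleton z)
  have hint : ∀ z ∈ W, Integrable
      (fun ω => (μ⟦S ⁻¹' Sig | mX⟧) ω * (μ⟦Z ⁻¹' {z} | mX⟧) ω) μ :=
    fun z _ => integrable_condExp.congr (hkey z)
  have hper : ∀ z : 𝓩,
      (∫ ω, (μ⟦S ⁻¹' Sig | mX⟧) ω * (μ⟦Z ⁻¹' {z} | mX⟧) ω ∂μ)
        = (μ (S ⁻¹' Sig ∩ Z ⁻¹' {z})).toReal := by
    intro z
    rw [← integral_congr_ae (hkey z), integral_condExp hmX]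
    exact @integral_indicator_one Ω mΩ μ _ (hAB z)
  -- rewrite RHS
  have hRHS : (∫ ω, (μ⟦S ⁻¹' Sig | mX⟧) ω
        * (∑ z ∈ W, (μ⟦Z ⁻¹' {z} | mX⟧) ω) ∂μ)
      = ∑ z ∈ W, (μ (S ⁻¹' Sig ∩ Z ⁻¹' {z})).toReal := by
    simp_rw [Finset.mul_sum]
    rw [integral_finset_sum W hint]
    exact Finset.sum_congr rfl fun z _ => hper z
  -- rewrite LHS
  have hset : {ω | S ω ∈ Sig ∧ T ω = t'} = ⋃ z ∈ W, (S ⁻¹' Sig ∩ Z ⁻¹' {z}) := by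
    ext ω
    simp only [Set.mem_setOf_eq, hW ω, Set.mem_iUnion, Set.mem_inter_iff, Set.mem_preimage,
      Set.mem_singleton_iff]
    constructor
    · rintro ⟨hs, hz⟩; exact ⟨Z ω, hz, hs, rfl⟩
    · rintro ⟨z, hz, hs, rfl⟩; exact ⟨hs, hz⟩
  have hLHS : μ {ω | S ω ∈ Sig ∧ T ω = t'} = ∑ z ∈ W, μ (S ⁻¹' Sig ∩ Z ⁻¹' {z}) := by
    rw [hset]
    refine measure_biUnion_finset ?_ fun z _ => hAB z
    intro a _ b _ hab
    refine Set.disjoint_left.mpr ?_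
    rintro ω ⟨_, ha⟩ ⟨_, hb⟩
    exact hab (ha.symm.trans hb)
  rw [hLHS, hRHS, ENNReal.toReal_sum]
  intro z _
  exact (measure_lt_top μ _).ne
end

section
/- Let P(T = t | Z = z, X) = Σ_{s∈S} 1{s(z) = t} P(S = s | X) hold for all t, z (which follows from S ⊥ Z | X and T determined by (S,Z)). If b is a row vector and B_t the binary matrix with B_t[i,j] = 1{s_j(z_i) = t}, and b B_t⁺ B_t = b, then for Σ = {s_j : b[j] = 1}, P(S ∈ Σ | X) = (b B_t⁺) · P_{t,Z}(X), where P_{t,Z}(X) is the vector with entries P(T = t | Z = z_i, X). -/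
open Matrix

/-- Identification of type probabilities (Lemma of Heckman–Pinto): suppose
`P(T = t | Z = z_i, X) = ∑_j 1{s_j(z_i) = t} q_j(X)` where `q_j(X) = P(S = s_j | X)`,
let `B_t` be the binary matrix `B_t[i,j] = 1{s_j(z_i) = t}`, and let `b` be a 0/1 row
vector with `b B_t⁺ B_t = b`.  Then for `Σ = {s_j : b_j = 1}`,
`P(S ∈ Σ | X) = (b B_t⁺) ⬝ P_{t,Z}(X)`, where `P_{t,Z}(X)` is the vector of
`P(T = t | Z = z_i, X)`. -/
theorem type_prob_identification {NZ NS : ℕ} {𝓩 𝓣 : Type*} [DecidableEq 𝓣]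
    (z : Fin NZ → 𝓩) (s : Fin NS → 𝓩 → 𝓣) (t : 𝓣)
    (Bt : Matrix (Fin NZ) (Fin NS) ℝ)
    (hBt : ∀ i j, Bt i j = if s j (z i) = t then 1 else 0)
    (Bplus : Matrix (Fin NS) (Fin NZ) ℝ)
    (b : Fin NS → ℝ) (hb01 : ∀ j, b j = 0 ∨ b j = 1)
    (hb : Matrix.vecMul b (Bplus * Bt) = b)
    {Ω : Type*} (q : Ω → Fin NS → ℝ) (PtZ : Ω → Fin NZ → ℝ)
    (hPtZ : ∀ ω i, PtZ ω i = ∑ j, (if s j (z i) = t then (1 : ℝ) else 0) * q ω j) :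
    ∀ ω, ∑ j ∈ Finset.univ.filter (fun j => b j = 1), q ω j
      = Matrix.vecMul b Bplus ⬝ᵥ PtZ ω := by
  intro ω
  have hP : PtZ ω = Bt.mulVec (q ω) := by
    funext i
    rw [hPtZ]
    simp [Matrix.mulVec, dotProduct, hBt]
  rw [hP, Matrix.dotProduct_mulVec, Matrix.vecMul_vecMul, hb]
  rw [dotProduct]
  rw [Finset.sum_filter]
  apply Finset.sum_congr rfl
  intro j _
  rcases hb01 j with h | h <;> simp [h]
end

section
/- Let Q: X × (B_Y × Σ_t) → ℝ be defined by Q_t(x, (B, Σ)) = b̃ · 1B_{t,Z}(x) for identifiable pairs, and suppose a family of probability kernels Q̃_t extending the Q_t exists, agreeing in total mass across t (Assumption 3). Then the joint law of potential outcomes and types constructed as the product P(Y_{t_1} ∈ B_1, ..., Y_{t_{N_T}} ∈ B_{N_T}, S ∈ Σ | Z=z, X) = (∏_t Q̃_t(X, B_t × Σ)/Q̃_t(X, Y × Σ)) · Q̃_{t_1}(X, Y × Σ) defines a valid probability measure on Y^{N_T} × S, not depending on z, whose t-marginal joint with S equals Q̃_t. -/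
open MeasureTheory

lemma map_eval_pi' {ι : Type*} [Fintype ι] [DecidableEq ι] {α : ι → Type*}
    [∀ i, MeasurableSpace (α i)]
    (μ : ∀ i, Measure (α i)) [∀ i, IsProbabilityMeasure (μ i)] (i : ι) :
    Measure.map (fun y => y i) (Measure.pi μ) = μ i := by
  ext A hA
  rw [Measure.map_apply (measurable_pi_apply i) hA]
  have h : (fun y : ∀ j, α j => y i) ⁻¹' A
      = Set.pi Set.univ (Function.update (fun j => (Set.univ : Set (α j))) i A) := by
    ext y
    simp only [Set.mem_preimage, Set.mem_pi, Set.mem_univ, true_implies]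
    constructor
    · intro hy j
      rcases eq_or_ne j i with rfl | hj
      · simpa using hy
      · simp [Function.update_of_ne hj]
    · intro hy; have := hy i; simpa using this
  rw [h, Measure.pi_pi]
  rw [Finset.prod_eq_single i]
  · simp
  · intro j _ hj; simp [Function.update_of_ne hj]
  · simp

/-- Construction of a joint law of potential outcomes and types from the family of
kernels `Q̃_t` (Assumption 3).  For each type `s`, let `ν t s` be the normalized
conditional law `Q̃_t(X, · × {s})/Q̃_t(X, 𝓨 × {s})` (a probability measure on the
outcome space), and let `w s = Q̃_t(X, 𝓨 × {s})` be the common (across `t`) type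
masses, with `∑ s, w s = 1`.  Then the product construction
`P = ∑ s, w s • (⊗_t ν t s) ⊗ δ_s` is a valid probability measure on
`𝓨^{N_T} × S` (independent of the instrument value `z`, which does not enter the
construction), and for each `t` its `t`-marginal jointly with the type equals
`∑ s, w s • (ν t s) ⊗ δ_s`, i.e. it agrees with `Q̃_t`. -/
theorem kernel_product_construction
    {𝓨 : Type*} [MeasurableSpace 𝓨] {S : Type*} [Fintype S] [MeasurableSpace S]
    [MeasurableSingletonClass S] {NT : ℕ}
    (ν : Fin NT → S → Measure 𝓨) (hν : ∀ t s, IsProbabilityMeasure (ν t s))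
    (w : S → NNReal) (hw : ∑ s, w s = 1) (t : Fin NT) :
    IsProbabilityMeasure
        (∑ s : S, (w s : ENNReal) •
          (Measure.map (fun y => (y, s)) (Measure.pi (fun t' => ν t' s)))) ∧
      Measure.map (fun p : (Fin NT → 𝓨) × S => (p.1 t, p.2))
          (∑ s : S, (w s : ENNReal) •
            (Measure.map (fun y => (y, s)) (Measure.pi (fun t' => ν t' s))))
        = ∑ s : S, (w s : ENNReal) • (Measure.map (fun y => (y, s)) (ν t s)) := by
  have hpi : ∀ s, IsProbabilityMeasure (Measure.pi (fun t' => ν t' s)) := by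
    intro s; exact MeasureTheory.Measure.pi.instIsProbabilityMeasure _
  have hmeas : ∀ s : S, Measurable (fun y : Fin NT → 𝓨 => (y, s)) :=
    fun s => measurable_id.prodMk measurable_const
  have hmeas1 : ∀ s : S, Measurable (fun y : 𝓨 => (y, s)) :=
    fun s => measurable_id.prodMk measurable_const
  have hproj : Measurable (fun p : (Fin NT → 𝓨) × S => (p.1 t, p.2)) :=
    ((measurable_pi_apply t).comp measurable_fst).prodMk measurable_snd
  constructor
  · constructor
    simp only [Measure.coe_finset_sum, Finset.sum_apply, Measure.smul_apply,
      smul_eq_mul]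
    have h1 : ∀ s : S, (Measure.map (fun y : Fin NT → 𝓨 => (y, s))
        (Measure.pi (fun t' => ν t' s))) Set.univ = 1 := by
      intro s
      rw [Measure.map_apply (hmeas s) MeasurableSet.univ]
      simp [(hpi s).measure_univ]
    simp only [h1, mul_one]
    rw [← ENNReal.coe_finset_sum, hw, ENNReal.coe_one]
  · rw [← Measure.sum_fintype, Measure.map_sum hproj.aemeasurable, Measure.sum_fintype]
    congr 1
    ext s : 1
    rw [Measure.map_smul, Measure.map_map hproj (hmeas s)]
    congr 1
    have heq : ((fun p : (Fin NT → 𝓨) × S => (p.1 t, p.2)) ∘ fun y => (y, s))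
        = (fun y : 𝓨 => (y, s)) ∘ (fun y : Fin NT → 𝓨 => y t) := rfl
    rw [heq, ← Measure.map_map (hmeas1 s) (measurable_pi_apply t),
      map_eval_pi' (fun t' => ν t' s) t]
end

section
/- If for every type s ∈ S and every treatment t and instrument pair (z, z') the set S satisfies unordered monotonicity, then for each t and each k, all types s, s' in Σ_{t,k} have identical t-indicator columns: 1{s(z) = t} = 1{s'(z) = t} for every instrument z. -/
/-- Lemma L-16: under unordered monotonicity, any two types in the same stratum
`Σ_{t,k}` (types in which treatment `t` appears exactly `k` times) have identical
`t`-indicator columns: `1{s(z) = t} = 1{s'(z) = t}` for every instrument `z`.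
The indicator inequality `1{s(z)=t} ≥ 1{s(z')=t}` for all `s ∈ S` is expressed as
`∀ s ∈ S, s z' = t → s z = t`. -/
theorem same_stratum_same_column {𝓩 𝓣 : Type*} [Fintype 𝓩] [DecidableEq 𝓣]
    (S : Set (𝓩 → 𝓣))
    (hmono : ∀ t : 𝓣, ∀ z z' : 𝓩,
      (∀ s ∈ S, s z' = t → s z = t) ∨ (∀ s ∈ S, s z = t → s z' = t))
    (t : 𝓣) (k : ℕ) :
    ∀ s ∈ S, ∀ s' ∈ S,
      (Finset.univ.filter (fun z => s z = t)).card = k →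
      (Finset.univ.filter (fun z => s' z = t)).card = k →
      ∀ z, (s z = t ↔ s' z = t) := by
  intro s hs s' hs' hA hB
  suffices h : (Finset.univ.filter (fun z => s z = t))
      = (Finset.univ.filter (fun z => s' z = t)) by
    intro z
    constructor
    · intro hz
      have : z ∈ Finset.univ.filter (fun z => s' z = t) := by
        rw [← h]; exact Finset.mem_filter.mpr ⟨Finset.mem_univ z, hz⟩
      exact (Finset.mem_filter.mp this).2
    · intro hz
      have : z ∈ Finset.univ.filter (fun z => s z = t) := by
        rw [h]; exact Finset.mem_filter.mpr ⟨Finset.mem_univ z, hz⟩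
      exact (Finset.mem_filter.mp this).2
  by_cases hsub : ∀ z, s z = t → s' z = t
  · apply Finset.eq_of_subset_of_card_le
    · intro z hz
      have hz' := (Finset.mem_filter.mp hz).2
      exact Finset.mem_filter.mpr ⟨Finset.mem_univ z, hsub z hz'⟩
    · rw [hA, hB]
  · push_neg at hsub
    obtain ⟨z₀, hz₀, hz₀'⟩ := hsub
    have hsup : ∀ z, s' z = t → s z = t := by
      intro z hz
      rcases hmono t z₀ z with h | h
      · exact absurd (h s' hs' hz) hz₀'
      · exact h s hs hz₀
    symm
    apply Finset.eq_of_subset_of_card_le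
    · intro z hz
      have hz' := (Finset.mem_filter.mp hz).2
      exact Finset.mem_filter.mpr ⟨Finset.mem_univ z, hsup z hz'⟩
    · rw [hA, hB]
end
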